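/- Let X be a two-dimensional real polyhedral Banach space whose closed unit ball has exactly 2n extreme points, for some n ∈ ℕ. Then X has Property P_{n−1}: for every choice of n−1 unit vectors x_1, …, x_{n−1} in X, the union x_1^⊥ ∪ … ∪ x_{n−1}^⊥ is a proper subset of X. -/

import Mathlib

/-- Birkhoff–James orthogonality: `x ⊥_B y` iff `‖x + λ y‖ ≥ ‖x‖` for all real `λ`. -/
def BJOrth {E : Type*} [NormedAddCommGroup E] [NormedSpace ℝ E] (x y : E) : Prop :=
  ∀ lam : ℝ, ‖x‖ ≤ ‖x + lam • y‖

/-- Property `P_n`: for every `n` unit vectors, the union of their Birkhoff–James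
orthogonality sets is a proper subset of the whole space. -/
def PropertyP (X : Type*) [NormedAddCommGroup X] [NormedSpace ℝ X] (n : ℕ) : Prop :=
  ∀ x : Fin n → X, (∀ i, ‖x i‖ = 1) → (⋃ i, {y : X | BJOrth (x i) y}) ≠ Set.univ

section Aux

variable {X : Type*} [NormedAddCommGroup X] [NormedSpace ℝ X]

open Set Metric

lemma neg_mem_extremePoints_ball {e : X}
    (h : e ∈ Set.extremePoints ℝ (Metric.closedBall (0 : X) 1)) :
    -e ∈ Set.extremePoints ℝ (Metric.closedBall (0 : X) 1) := by
  obtain ⟨he, hext⟩ := h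
  rw [mem_closedBall_zero_iff] at he
  refine ⟨by simpa [mem_closedBall_zero_iff] using he, ?_⟩
  intro x₁ hx₁ x₂ hx₂ hseg
  have h1 : -x₁ ∈ Metric.closedBall (0 : X) 1 := by
    rw [mem_closedBall_zero_iff] at hx₁ ⊢; simpa using hx₁
  have h2 : -x₂ ∈ Metric.closedBall (0 : X) 1 := by
    rw [mem_closedBall_zero_iff] at hx₂ ⊢; simpa using hx₂
  have hseg' : e ∈ openSegment ℝ (-x₁) (-x₂) := by
    obtain ⟨a, b, ha, hb, hab, hsum⟩ := hseg
    exact ⟨a, b, ha, hb, hab, by rw [smul_neg, smul_neg, ← neg_add, hsum, neg_neg]⟩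
  have hh1 := hext h1 h2 hseg'
  rw [← neg_neg x₁, hh1]

lemma norm_eq_one_of_extremePoint [Nontrivial X] {e : X}
    (h : e ∈ Set.extremePoints ℝ (Metric.closedBall (0 : X) 1)) : ‖e‖ = 1 := by
  obtain ⟨he, hext⟩ := h
  rw [mem_closedBall_zero_iff] at he
  by_contra hne
  have hlt : ‖e‖ < 1 := lt_of_le_of_ne he hne
  rcases eq_or_ne e 0 with rfl | hne0
  · obtain ⟨v, hv⟩ := exists_ne (0 : X)
    set u : X := ‖v‖⁻¹ • v with hu_def
    have hvpos : (0 : ℝ) < ‖v‖ := norm_pos_iff.mpr hv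
    have hu : ‖u‖ = 1 := by
      rw [hu_def, norm_smul, norm_inv, norm_norm, inv_mul_cancel₀ hvpos.ne']
    have hu0 : u ≠ 0 := by
      intro h0; rw [h0] at hu; simp at hu
    have hmem : (0 : X) ∈ openSegment ℝ u (-u) :=
      ⟨1/2, 1/2, by norm_num, by norm_num, by norm_num, by
        rw [smul_neg, add_neg_cancel]⟩
    have := hext (x₁ := u) (by rw [mem_closedBall_zero_iff, hu]) (x₂ := -u)
      (by rw [mem_closedBall_zero_iff, norm_neg, hu]) hmem
    exact hu0 this
  · have hpos : (0 : ℝ) < ‖e‖ := norm_pos_iff.mpr hne0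
    set u : X := ‖e‖⁻¹ • e with hu_def
    have hu : ‖u‖ = 1 := by
      rw [hu_def, norm_smul, norm_inv, norm_norm, inv_mul_cancel₀ hpos.ne']
    have hmem : e ∈ openSegment ℝ 0 u := by
      refine ⟨1 - ‖e‖, ‖e‖, by linarith, hpos, by ring, ?_⟩
      rw [smul_zero, zero_add, hu_def, smul_smul, mul_inv_cancel₀ hpos.ne', one_smul]
    have := hext (x₁ := 0) (by simp) (x₂ := u) (by rw [mem_closedBall_zero_iff, hu]) hmem
    exact hne0 this.symm

end Aux

open Set Metric Module

/-- A two-dimensional real polyhedral Banach space whose closed unit ball has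
exactly `2n` extreme points has Property `P_{n−1}`. -/
theorem stmt8 {X : Type*} [NormedAddCommGroup X] [NormedSpace ℝ X] [CompleteSpace X]
    (hX : Module.finrank ℝ X = 2) (n : ℕ)
    (hpoly : (Set.extremePoints ℝ (Metric.closedBall (0 : X) 1)).Finite)
    (hcard : (Set.extremePoints ℝ (Metric.closedBall (0 : X) 1)).ncard = 2 * n) :
    PropertyP X (n - 1) := by
  classical
  have hfd : FiniteDimensional ℝ X := FiniteDimensional.of_finrank_eq_succ hX
  have hnt : Nontrivial X := Module.nontrivial_of_finrank_pos (R := ℝ) (by omega)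
  intro x hx hcover
  set E := Set.extremePoints ℝ (Metric.closedBall (0 : X) 1) with hEdef
  rcases Nat.eq_zero_or_pos n with rfl | hn
  · -- trivial case: no vectors at all
    have h0 : (⋃ i : Fin (0 - 1), {y : X | BJOrth (x i) y}) = (∅ : Set X) := by
      simp
    rw [h0] at hcover
    exact absurd hcover Set.empty_ne_univ
  -- the closed unit ball is the convex hull of its extreme points
  have hball : Metric.closedBall (0 : X) 1 = convexHull ℝ E := by
    have h1 := closure_convexHull_extremePoints (isCompact_closedBall (0 : X) 1)
      (convex_closedBall (0 : X) 1)
    rw [(hpoly.isClosed_convexHull ℝ).closure_eq] at h1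
    exact h1.symm
  -- choose an extreme point distinct from all ± x i
  set S : Finset X := Finset.univ.biUnion (fun i : Fin (n - 1) => {x i, -x i}) with hSdef
  have hScard : S.card ≤ 2 * (n - 1) := by
    calc S.card ≤ ∑ i : Fin (n - 1), ({x i, -x i} : Finset X).card :=
          Finset.card_biUnion_le
    _ ≤ ∑ _i : Fin (n - 1), 2 := by
          refine Finset.sum_le_sum fun i _ => ?_
          exact (Finset.card_insert_le _ _).trans (by simp)
    _ = 2 * (n - 1) := by simp [mul_comm]
  have hnotsub : ¬ (E ⊆ (S : Set X)) := by
    intro hsub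
    have := Set.ncard_le_ncard hsub S.finite_toSet
    rw [hcard, Set.ncard_coe_finset] at this
    omega
  obtain ⟨e, heE, heS⟩ := Set.not_subset.mp hnotsub
  have hne : ∀ i : Fin (n - 1), e ≠ x i ∧ e ≠ -x i := by
    intro i
    constructor <;> intro h <;> apply heS <;>
      · rw [hSdef]
        refine Finset.mem_biUnion.mpr ⟨i, Finset.mem_univ _, ?_⟩
        simp [h]
  have heBall : e ∈ Metric.closedBall (0 : X) 1 := heE.1
  have heNorm : ‖e‖ = 1 := norm_eq_one_of_extremePoint heE
  have heNe0 : e ≠ 0 := by intro h; rw [h] at heNorm; simp at heNorm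
  -- separate e from the convex hull of the other extreme points
  have hconvdiff : Convex ℝ (Metric.closedBall (0 : X) 1 \ {e}) :=
    ((convex_closedBall (0 : X) 1).mem_extremePoints_iff_convex_diff.mp heE).2
  have hnotmem : e ∉ convexHull ℝ (E \ {e}) := by
    intro hmem
    have hsub : convexHull ℝ (E \ {e}) ⊆ Metric.closedBall (0 : X) 1 \ {e} :=
      convexHull_min (Set.diff_subset_diff_left extremePoints_subset) hconvdiff
    exact (hsub hmem).2 rfl
  obtain ⟨g, u, hgu, hue⟩ := geometric_hahn_banach_closed_point
    (convex_convexHull ℝ _) ((hpoly.diff (t := {e})).isClosed_convexHull ℝ) hnotmem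
  have hstrict : ∀ e' ∈ E, e' ≠ e → g e' < g e := by
    intro e' h1 h2
    exact lt_trans (hgu _ (subset_convexHull ℝ _ ⟨h1, h2⟩)) hue
  have hnegE : -e ∈ E := neg_mem_extremePoints_ball heE
  have hnee : -e ≠ e := by
    intro h
    apply heNe0
    have h2 : e + e = 0 := by nth_rewrite 2 [← h]; exact add_neg_cancel e
    have h3 : (2 : ℝ) • e = 0 := by rw [two_smul]; exact h2
    rcases smul_eq_zero.mp h3 with h4 | h4
    · norm_num at h4
    · exact h4
  have hgepos : 0 < g e := by
    have h1 : g (-e) < g e := hstrict _ hnegE hnee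
    rw [map_neg] at h1
    linarith
  -- normalize the functional
  set c : ℝ := g e with hcdef
  set G : X →L[ℝ] ℝ := c⁻¹ • g with hGdef
  have hGe : G e = 1 := by
    rw [hGdef]
    simp only [ContinuousLinearMap.smul_apply, smul_eq_mul]
    rw [← hcdef, inv_mul_cancel₀ hgepos.ne']
  have hGlt : ∀ e' ∈ E, e' ≠ e → G e' < 1 := by
    intro e' h1 h2
    have h3 := hstrict e' h1 h2
    have : c⁻¹ * g e' < c⁻¹ * c :=
      mul_lt_mul_of_pos_left (by rw [hcdef]; exact h3) (inv_pos.mpr hgepos)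
    rw [inv_mul_cancel₀ hgepos.ne'] at this
    simpa [hGdef, ContinuousLinearMap.smul_apply, smul_eq_mul] using this
  have hGle : ∀ e' ∈ E, G e' ≤ 1 := by
    intro e' h1
    rcases eq_or_ne e' e with rfl | h2
    · exact le_of_eq hGe
    · exact (hGlt e' h1 h2).le
  have hballle : ∀ z ∈ Metric.closedBall (0 : X) 1, G z ≤ 1 := by
    intro z hz
    rw [hball] at hz
    have hsub : convexHull ℝ E ⊆ {w : X | G w ≤ 1} :=
      convexHull_min (fun e' he' => hGle e' he')
        (convex_halfSpace_le (ContinuousLinearMap.toLinearMap G).isLinear 1)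
    exact hsub hz
  -- uniqueness: G z = 1 on the ball only at e
  have huniq : ∀ z ∈ Metric.closedBall (0 : X) 1, G z = 1 → z = e := by
    intro z hz hz1
    rw [hball, hpoly.convexHull_eq] at hz
    obtain ⟨w, hw0, hw1, hwz⟩ := hz
    rw [Finset.centerMass_eq_of_sum_1 _ _ hw1] at hwz
    simp only [id_eq] at hwz
    have heT : e ∈ hpoly.toFinset := hpoly.mem_toFinset.mpr heE
    have hGz : ∑ y ∈ hpoly.toFinset, w y * G y = 1 := by
      rw [← hz1, ← hwz, map_sum]
      simp [smul_eq_mul]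
    have hsum0 : ∑ y ∈ hpoly.toFinset, w y * (1 - G y) = 0 := by
      have : ∑ y ∈ hpoly.toFinset, w y * (1 - G y)
          = (∑ y ∈ hpoly.toFinset, w y) - ∑ y ∈ hpoly.toFinset, w y * G y := by
        rw [← Finset.sum_sub_distrib]
        congr 1; ext y; ring
      rw [this, hw1, hGz, sub_self]
    have hzero : ∀ y ∈ hpoly.toFinset, y ≠ e → w y = 0 := by
      intro y hy hyne
      have hymem : y ∈ E := hpoly.mem_toFinset.mp hy
      have hterm : ∀ y' ∈ hpoly.toFinset, 0 ≤ w y' * (1 - G y') := by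
        intro y' hy'
        have := hGle y' (hpoly.mem_toFinset.mp hy')
        exact mul_nonneg (hw0 y' (hpoly.mem_toFinset.mp hy')) (by linarith)
      have := (Finset.sum_eq_zero_iff_of_nonneg hterm).mp hsum0 y hy
      rcases mul_eq_zero.mp this with h | h
      · exact h
      · exact absurd h (by have := hGlt y hymem hyne; intro hc; linarith)
    have hze : z = w e • e := by
      rw [← hwz]
      exact Finset.sum_eq_single_of_mem e heT
        (fun y hy hyne => by rw [hzero y hy hyne, zero_smul])
    have hwe : w e = 1 := by
      rw [← hw1]
      exact (Finset.sum_eq_single_of_mem e heT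
        (fun y hy hyne => hzero y hy hyne)).symm
    rw [hze, hwe, one_smul]
  -- |G (x i)| < 1 for all i
  have habs : ∀ i : Fin (n - 1), |G (x i)| < 1 := by
    intro i
    have hxi : x i ∈ Metric.closedBall (0 : X) 1 :=
      mem_closedBall_zero_iff.mpr (le_of_eq (hx i))
    have hxin : -x i ∈ Metric.closedBall (0 : X) 1 := by
      rw [mem_closedBall_zero_iff, norm_neg]; exact le_of_eq (hx i)
    have h1 : G (x i) < 1 :=
      lt_of_le_of_ne (hballle _ hxi) (fun h => (hne i).1 (huniq _ hxi h).symm)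
    have h2 : G (-x i) < 1 :=
      lt_of_le_of_ne (hballle _ hxin) (fun h => (hne i).2 (huniq _ hxin h).symm)
    rw [map_neg] at h2
    rw [abs_lt]; exact ⟨by linarith, h1⟩
  -- find a nonzero kernel vector
  have hker1 : finrank ℝ (LinearMap.ker (ContinuousLinearMap.toLinearMap G)) = 1 := by
    have hrn := LinearMap.finrank_range_add_finrank_ker (ContinuousLinearMap.toLinearMap G)
    rw [hX] at hrn
    have hrange_ne : LinearMap.range (ContinuousLinearMap.toLinearMap G) ≠ ⊥ := by
      intro h
      have : (1 : ℝ) ∈ LinearMap.range (ContinuousLinearMap.toLinearMap G) :=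
        ⟨e, by simpa using hGe⟩
      rw [h] at this
      simp at this
    have h1 : finrank ℝ (LinearMap.range (ContinuousLinearMap.toLinearMap G)) ≠ 0 := by
      simp only [ne_eq, Submodule.finrank_eq_zero]
      exact hrange_ne
    have h2 : finrank ℝ (LinearMap.range (ContinuousLinearMap.toLinearMap G))
        ≤ finrank ℝ ℝ := Submodule.finrank_le _
    rw [Module.finrank_self] at h2
    omega
  have hkerne : LinearMap.ker (ContinuousLinearMap.toLinearMap G) ≠ ⊥ := by
    intro h
    rw [h] at hker1
    simp [finrank_bot] at hker1
  obtain ⟨y₀, hy₀mem, hy₀ne⟩ := (Submodule.ne_bot_iff _).mp hkerne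
  have hspan : Submodule.span ℝ {y₀} = LinearMap.ker (ContinuousLinearMap.toLinearMap G) :=
    Submodule.eq_of_le_of_finrank_eq
      ((Submodule.span_le).mpr (by simpa using hy₀mem))
      (by rw [finrank_span_singleton hy₀ne, hker1])
  -- derive the contradiction
  have hy₀cov : y₀ ∈ (⋃ i, {y : X | BJOrth (x i) y}) := hcover ▸ Set.mem_univ y₀
  obtain ⟨i, hi⟩ := Set.mem_iUnion.mp hy₀cov
  have hiB : BJOrth (x i) y₀ := hi
  set z : X := G (x i) • e with hzdef
  have hzker : z - x i ∈ LinearMap.ker (ContinuousLinearMap.toLinearMap G) := by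
    rw [LinearMap.mem_ker]
    have : G (z - x i) = 0 := by
      rw [map_sub, hzdef, map_smul, smul_eq_mul, hGe, mul_one, sub_self]
    simpa using this
  rw [← hspan] at hzker
  obtain ⟨lam, hlam⟩ := Submodule.mem_span_singleton.mp hzker
  have hb := hiB lam
  rw [hx i, hlam] at hb
  have hadd : x i + (z - x i) = z := by abel
  rw [hadd] at hb
  have hznorm : ‖z‖ < 1 := by
    rw [hzdef, norm_smul, heNorm, mul_one, Real.norm_eq_abs]
    exact habs i
  linarith
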